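/- For n ≤ 5: if T ∈ Z^×(C^{×(0)}∪C^{×(1)}) is invertible with reverse(T)·T central invertible, then T C^1 T^{-1} ⊆ C^1. I.e. Q ⊆ Γ (hence Q = Γ) in dimensions n ≤ 5. -/

import Mathlib

open CliffordAlgebra

noncomputable section

variable {n : ℕ} (Q : QuadraticForm ℝ (Fin n → ℝ))

/-- The standard generators `e_a` of the Clifford algebra. -/
def egen (a : Fin n) : CliffordAlgebra Q := ι Q (Pi.single a 1)

/-- The ordered product of generators indexed by a finite set. -/
def eProd (s : Finset (Fin n)) : CliffordAlgebra Q :=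
  ((s.sort (· ≤ ·)).map (egen Q)).prod

/-- The grade-`k` subspace `C^k`, spanned by the products of `k` distinct generators. -/
def gradeSubmodule (k : ℕ) : Submodule ℝ (CliffordAlgebra Q) :=
  Submodule.span ℝ {x | ∃ s : Finset (Fin n), s.card = k ∧ x = eProd Q s}

/-- The set `Z^× (C^{×(0)} ∪ C^{×(1)})` : invertible central elements times
invertible even or odd elements. -/
def Pset : Set (CliffordAlgebra Q) :=
  {T | ∃ W T₀ : CliffordAlgebra Q,
    W ∈ Subalgebra.center ℝ (CliffordAlgebra Q) ∧ IsUnit W ∧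
    (T₀ ∈ evenOdd Q 0 ∨ T₀ ∈ evenOdd Q 1) ∧ IsUnit T₀ ∧ T = W * T₀}

/-- `Q` is diagonal with entries `±1` in the standard basis (an orthonormal-type basis,
expressing nondegeneracy of `Q`). -/
def DiagQ : Prop :=
  (∀ a, Q (Pi.single a 1) = 1 ∨ Q (Pi.single a 1) = -1) ∧
  (∀ a b : Fin n, a ≠ b → QuadraticMap.polar Q (Pi.single a 1) (Pi.single b 1) = 0)

open scoped symmDiff

def lprod (l : List (Fin n)) : CliffordAlgebra Q := (l.map (egen Q)).prod

variable {Q}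

@[simp] lemma lprod_nil : lprod Q ([] : List (Fin n)) = 1 := rfl

@[simp] lemma lprod_cons (a : Fin n) (l : List (Fin n)) :
    lprod Q (a :: l) = egen Q a * lprod Q l := by simp [lprod]

@[simp] lemma lprod_append (l l' : List (Fin n)) :
    lprod Q (l ++ l') = lprod Q l * lprod Q l' := by simp [lprod]

lemma eProd_eq_lprod (s : Finset (Fin n)) : eProd Q s = lprod Q (s.sort (· ≤ ·)) := rfl

@[simp] lemma eProd_empty : eProd Q (∅ : Finset (Fin n)) = 1 := by
  simp [eProd_eq_lprod]

@[simp] lemma eProd_singleton (a : Fin n) : eProd Q {a} = egen Q a := by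
  simp [eProd_eq_lprod, Finset.sort_singleton]

lemma egen_sq (a : Fin n) :
    egen Q a * egen Q a = algebraMap ℝ _ (Q (Pi.single a 1)) := ι_sq_scalar Q _

variable (hQ : DiagQ Q)
include hQ

lemma qne (a : Fin n) : Q (Pi.single a 1) ≠ 0 := by
  rcases hQ.1 a with h | h <;> rw [h] <;> norm_num

lemma egen_anticomm {a b : Fin n} (h : a ≠ b) :
    egen Q a * egen Q b = -(egen Q b * egen Q a) := by
  have h2 := ι_mul_ι_add_swap (Q := Q) (Pi.single a 1) (Pi.single b 1)
  rw [hQ.2 a b h, map_zero] at h2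
  rw [eq_neg_iff_add_eq_zero]
  exact h2

lemma lprod_mul_egen {a : Fin n} {l : List (Fin n)} (hal : a ∉ l) :
    lprod Q l * egen Q a = ((-1 : ℝ) ^ l.length) • (egen Q a * lprod Q l) := by
  induction l with
  | nil => simp
  | cons b l ih =>
    have hb : b ≠ a := fun hba => hal (hba ▸ List.mem_cons_self)
    have hl : a ∉ l := fun hl => hal (List.mem_cons_of_mem _ hl)
    rw [lprod_cons, mul_assoc, ih hl, mul_smul_comm, ← mul_assoc,
      egen_anticomm hQ hb, List.length_cons, pow_succ]
    rw [neg_mul, smul_neg, mul_assoc, ← neg_smul, ← smul_smul]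
    norm_num

lemma lprod_perm : ∀ {l l' : List (Fin n)}, l.Perm l' → l.Nodup →
    ∃ c : ℝ, c ≠ 0 ∧ lprod Q l = c • lprod Q l' := by
  intro l l' h
  induction h with
  | nil => exact fun _ => ⟨1, one_ne_zero, by simp⟩
  | cons x h ih =>
    intro hd
    obtain ⟨c, hc, hl⟩ := ih (List.Nodup.of_cons hd)
    exact ⟨c, hc, by rw [lprod_cons, hl, lprod_cons, mul_smul_comm]⟩
  | swap x y l =>
    intro hd
    have hxy : y ≠ x := by
      intro h; subst h
      simp at hd
    refine ⟨-1, by norm_num, ?_⟩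
    rw [lprod_cons, lprod_cons, lprod_cons, lprod_cons, ← mul_assoc, ← mul_assoc,
      egen_anticomm hQ hxy]
    simp
  | trans h1 h2 ih1 ih2 =>
    intro hd
    obtain ⟨c, hc, e1⟩ := ih1 hd
    obtain ⟨c', hc', e2⟩ := ih2 (h1.nodup hd)
    exact ⟨c * c', mul_ne_zero hc hc', by rw [e1, e2, smul_smul]⟩

lemma lprod_eq_eProd {l : List (Fin n)} (hl : l.Nodup) :
    ∃ c : ℝ, c ≠ 0 ∧ lprod Q l = c • eProd Q l.toFinset := by
  have hperm : l.Perm (l.toFinset.sort (· ≤ ·)) := by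
    rw [List.perm_ext_iff_of_nodup hl (Finset.sort_nodup _ _)]
    intro a
    simp [Finset.mem_sort, List.mem_toFinset]
  exact lprod_perm hQ hperm hl

lemma egen_mul_eProd_notmem {a : Fin n} {s : Finset (Fin n)} (ha : a ∉ s) :
    ∃ c : ℝ, c ≠ 0 ∧ egen Q a * eProd Q s = c • eProd Q (insert a s) := by
  have hnd : (a :: s.sort (· ≤ ·)).Nodup := by
    refine List.nodup_cons.mpr ⟨?_, Finset.sort_nodup _ _⟩
    simpa [Finset.mem_sort] using ha
  obtain ⟨c, hc, h⟩ := lprod_eq_eProd hQ hnd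
  refine ⟨c, hc, ?_⟩
  have hts : (a :: s.sort (· ≤ ·)).toFinset = insert a s := by
    ext b; simp [Finset.mem_sort, List.mem_toFinset]
  rw [← hts]
  simpa [eProd_eq_lprod] using h

lemma egen_mul_eProd_mem {a : Fin n} {s : Finset (Fin n)} (ha : a ∈ s) :
    ∃ c : ℝ, c ≠ 0 ∧ egen Q a * eProd Q s = c • eProd Q (s.erase a) := by
  obtain ⟨c, hc, h⟩ := egen_mul_eProd_notmem hQ (Finset.notMem_erase a s)
  rw [Finset.insert_erase ha] at h
  refine ⟨c⁻¹ * Q (Pi.single a 1), mul_ne_zero (inv_ne_zero hc) (qne hQ a), ?_⟩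
  have hs : eProd Q s = c⁻¹ • (egen Q a * eProd Q (s.erase a)) := by
    rw [h, smul_smul, inv_mul_cancel₀ hc, one_smul]
  rw [hs, mul_smul_comm, ← mul_assoc, egen_sq, ← Algebra.smul_def, smul_smul]

omit hQ in
lemma singleton_symmDiff (a : Fin n) (s : Finset (Fin n)) :
    ({a} : Finset (Fin n)) ∆ s = if a ∈ s then s.erase a else insert a s := by
  split_ifs with h
  · ext b
    simp only [Finset.mem_symmDiff, Finset.mem_singleton, Finset.mem_erase]
    constructor
    · rintro (⟨rfl, hb⟩ | ⟨hb, hb'⟩)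
      · exact absurd h hb
      · exact ⟨fun e => hb' (e ▸ rfl), hb⟩
    · rintro ⟨hb, hbs⟩
      exact Or.inr ⟨hbs, fun e => hb e⟩
  · ext b
    simp only [Finset.mem_symmDiff, Finset.mem_singleton, Finset.mem_insert]
    constructor
    · rintro (⟨rfl, _⟩ | ⟨hb, _⟩)
      · exact Or.inl rfl
      · exact Or.inr hb
    · rintro (rfl | hb)
      · exact Or.inl ⟨rfl, h⟩
      · refine Or.inr ⟨hb, ?_⟩
        rintro rfl; exact h hb

lemma egen_mul_eProd (a : Fin n) (s : Finset (Fin n)) :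
    ∃ c : ℝ, c ≠ 0 ∧ egen Q a * eProd Q s = c • eProd Q (({a} : Finset (Fin n)) ∆ s) := by
  rw [singleton_symmDiff]
  by_cases h : a ∈ s
  · rw [if_pos h]; exact egen_mul_eProd_mem hQ h
  · rw [if_neg h]; exact egen_mul_eProd_notmem hQ h

lemma lprod_mul_eProd (l : List (Fin n)) (hl : l.Nodup) (t : Finset (Fin n)) :
    ∃ c : ℝ, c ≠ 0 ∧ lprod Q l * eProd Q t = c • eProd Q (l.toFinset ∆ t) := by
  induction l with
  | nil =>
    refine ⟨1, one_ne_zero, ?_⟩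
    have he : (List.toFinset ([] : List (Fin n))) ∆ t = t := by
      ext b; simp [Finset.mem_symmDiff]
    rw [he]; simp
  | cons a l ih =>
    have hal : a ∉ l := (List.nodup_cons.mp hl).1
    obtain ⟨c, hc, h⟩ := ih (List.nodup_cons.mp hl).2
    obtain ⟨c', hc', h'⟩ := egen_mul_eProd hQ a (l.toFinset ∆ t)
    refine ⟨c * c', mul_ne_zero hc hc', ?_⟩
    have hset : ({a} : Finset (Fin n)) ∆ (l.toFinset ∆ t) = (insert a l.toFinset) ∆ t := by
      rw [← symmDiff_assoc]
      congr 1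
      ext b
      simp only [Finset.mem_symmDiff, Finset.mem_singleton, Finset.mem_insert,
        List.mem_toFinset]
      by_cases hb : b = a
      · subst hb; simp [hal]
      · simp [hb]
    rw [lprod_cons, mul_assoc, h, mul_smul_comm, h', hset, smul_smul, List.toFinset_cons]

lemma eProd_mul_eProd (s t : Finset (Fin n)) :
    ∃ c : ℝ, c ≠ 0 ∧ eProd Q s * eProd Q t = c • eProd Q (s ∆ t) := by
  obtain ⟨c, hc, h⟩ := lprod_mul_eProd hQ (s.sort (· ≤ ·)) (Finset.sort_nodup _ _) t
  refine ⟨c, hc, ?_⟩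
  rw [eProd_eq_lprod, h]
  congr 2
  ext b; simp [List.mem_toFinset, Finset.mem_sort]

lemma eProd_sq (s : Finset (Fin n)) :
    ∃ c : ℝ, c ≠ 0 ∧ eProd Q s * eProd Q s = c • 1 := by
  obtain ⟨c, hc, h⟩ := eProd_mul_eProd hQ s s
  refine ⟨c, hc, ?_⟩
  rw [h, symmDiff_self]
  norm_num

omit hQ in
lemma nontrivialC : Nontrivial (CliffordAlgebra Q) := inferInstance

lemma eProd_ne_zero (s : Finset (Fin n)) : eProd Q s ≠ 0 := by
  obtain ⟨c, hc, h⟩ := eProd_sq hQ s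
  intro h0
  rw [h0, zero_mul] at h
  have : c = 0 := by
    have := h.symm
    rcases smul_eq_zero.mp this with h1 | h1
    · exact h1
    · exact absurd h1 one_ne_zero
  exact hc this

lemma q_expand (s : Finset (Fin n)) (v : Fin n → ℝ) :
    Q (∑ b ∈ s, v b • (Pi.single b 1 : Fin n → ℝ)) = ∑ b ∈ s, (v b)^2 * Q (Pi.single b 1) := by
  classical
  induction s using Finset.cons_induction with
  | empty => simp
  | cons a s ha ih =>
    rw [Finset.sum_cons, Finset.sum_cons, ← ih]
    have key : ∀ x y : Fin n → ℝ, Q (x + y) = Q x + Q y + QuadraticMap.polar Q x y := by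
      intro x y
      rw [QuadraticMap.polar]
      ring
    rw [key]
    have hp : QuadraticMap.polar Q (v a • (Pi.single a 1 : Fin n → ℝ))
        (∑ b ∈ s, v b • (Pi.single b 1 : Fin n → ℝ)) = 0 := by
      rw [QuadraticMap.polar_smul_left]
      have hsum : QuadraticMap.polar Q (Pi.single a 1 : Fin n → ℝ)
          (∑ b ∈ s, v b • (Pi.single b 1 : Fin n → ℝ)) =
          ∑ b ∈ s, v b • QuadraticMap.polar Q (Pi.single a 1 : Fin n → ℝ)
            (Pi.single b 1 : Fin n → ℝ) := by
        rw [← QuadraticMap.polarBilin_apply_apply, map_sum]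
        simp_rw [map_smul, QuadraticMap.polarBilin_apply_apply]
      rw [hsum, Finset.sum_eq_zero, smul_zero]
      intro b hb
      rw [hQ.2 a b (fun e => ha (e ▸ hb)), smul_zero]
    rw [hp, add_zero, QuadraticMap.map_smul, smul_eq_mul]
    ring

omit hQ in
lemma pi_decomp (v : Fin n → ℝ) : ∑ b, v b • (Pi.single b 1 : Fin n → ℝ) = v := by
  have : ∀ b : Fin n, v b • (Pi.single b 1 : Fin n → ℝ) = Pi.single b (v b) := by
    intro b
    rw [← Pi.single_smul, smul_eq_mul, mul_one]
  simp_rw [this]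
  exact Finset.univ_sum_single v

lemma Qval (v : Fin n → ℝ) : Q v = ∑ b, (v b)^2 * Q (Pi.single b 1) := by
  conv_lhs => rw [← pi_decomp v]
  exact q_expand hQ _ v

omit hQ in
lemma update_add (u v : Fin n → ℝ) (a : Fin n) (x y : ℝ) :
    Function.update (u + v) a (x + y) = Function.update u a x + Function.update v a y := by
  funext b
  by_cases h : b = a <;> simp [Function.update_apply, h]

def flipL (a : Fin n) : (Fin n → ℝ) →ₗ[ℝ] (Fin n → ℝ) where
  toFun v := Function.update v a (-(v a))
  map_add' u v := by
    funext b
    by_cases h : b = a <;> simp [Function.update_apply, h] <;> ring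
  map_smul' r v := by
    funext b
    by_cases h : b = a <;> simp [Function.update_apply, h] <;> ring

def flipIso (hQ : DiagQ Q) (a : Fin n) : Q →qᵢ Q where
  toLinearMap := flipL a
  map_app' v := by
    rw [Qval hQ, Qval hQ]
    refine Finset.sum_congr rfl fun b _ => ?_
    by_cases h : b = a
    · subst h
      simp [flipL, Function.update_apply]
    · simp [flipL, Function.update_apply, h]

def alpha (hQ : DiagQ Q) (a : Fin n) :
    CliffordAlgebra Q →ₐ[ℝ] CliffordAlgebra Q := CliffordAlgebra.map (flipIso hQ a)

lemma alpha_egen (a b : Fin n) :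
    alpha hQ a (egen Q b) = (if b = a then -(egen Q b) else egen Q b) := by
  rw [alpha, egen, map_apply_ι]
  by_cases h : b = a
  · subst h
    have : (flipIso hQ b) (Pi.single b 1 : Fin n → ℝ) = -(Pi.single b 1 : Fin n → ℝ) := by
      show Function.update _ b _ = _
      funext c
      by_cases hc : c = b <;> simp [Function.update_apply, hc]
    rw [this, map_neg, if_pos rfl]
  · have : (flipIso hQ a) (Pi.single b 1 : Fin n → ℝ) = (Pi.single b 1 : Fin n → ℝ) := by
      show Function.update _ a _ = _
      funext c
      by_cases hc : c = a
      · subst hc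
        simp [Function.update_apply, Pi.single_apply, h]
      · simp [Function.update_apply, hc]
    rw [this, if_neg h]

lemma alpha_lprod (a : Fin n) (l : List (Fin n)) :
    alpha hQ a (lprod Q l) = ((-1 : ℝ) ^ (l.count a)) • lprod Q l := by
  induction l with
  | nil => simp [alpha]
  | cons b l ih =>
    rw [lprod_cons, map_mul, ih, alpha_egen]
    by_cases h : b = a
    · subst h
      rw [if_pos rfl, neg_mul, mul_smul_comm, List.count_cons_self, pow_succ, mul_neg_one,
        neg_smul]
    · rw [if_neg h, List.count_cons_of_ne h, mul_smul_comm]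

lemma alpha_eProd (a : Fin n) (s : Finset (Fin n)) :
    alpha hQ a (eProd Q s) = (if a ∈ s then (-1 : ℝ) else 1) • eProd Q s := by
  rw [eProd_eq_lprod, alpha_lprod]
  by_cases h : a ∈ s
  · rw [if_pos h]
    have : (s.sort (· ≤ ·)).count a = 1 :=
      List.count_eq_one_of_mem (Finset.sort_nodup _ _) ((Finset.mem_sort _).mpr h)
    rw [this, pow_one]
  · rw [if_neg h]
    have : (s.sort (· ≤ ·)).count a = 0 :=
      List.count_eq_zero.mpr (fun hm => h ((Finset.mem_sort _).mp hm))
    rw [this, pow_zero]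

lemma indep_aux (F : Finset (Finset (Fin n))) :
    ∀ (c : Finset (Fin n) → ℝ), (∑ s ∈ F, c s • eProd Q s) = 0 → ∀ t ∈ F, c t = 0 := by
  classical
  induction F using Finset.strongInduction with
  | _ F ih =>
    intro c hsum t ht
    by_cases hFt : ∀ s ∈ F, s = t
    · have hF : F = {t} := by
        apply Finset.eq_singleton_iff_unique_mem.mpr
        exact ⟨ht, hFt⟩
      rw [hF, Finset.sum_singleton] at hsum
      rcases smul_eq_zero.mp hsum with h | h
      · exact h
      · exact absurd h (eProd_ne_zero hQ t)
    · push_neg at hFt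
      obtain ⟨t', ht', htt'⟩ := hFt
      have hne : (t' ∆ t).Nonempty := by
        rw [Finset.nonempty_iff_ne_empty]
        intro h
        exact htt' (symmDiff_eq_bot.mp h)
      obtain ⟨a, ha⟩ := hne
      rw [Finset.mem_symmDiff] at ha
      set εt : ℝ := if a ∈ t then -1 else 1 with hεt
      set d : Finset (Fin n) → ℝ := fun s => if (a ∈ s ↔ a ∈ t) then c s else 0 with hd
      have h2 : ∑ s ∈ F, c s • ((if a ∈ s then (-1:ℝ) else 1) • eProd Q s) = 0 := by
        have h2' : alpha hQ a (∑ s ∈ F, c s • eProd Q s) = 0 := by rw [hsum, map_zero]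
        rw [map_sum] at h2'
        simp_rw [map_smul, alpha_eProd hQ] at h2'
        exact h2'
      have hδ : ∀ s, d s • eProd Q s =
          (1/2 : ℝ) • (c s • eProd Q s) + (εt/2) • (c s • ((if a ∈ s then (-1:ℝ) else 1) • eProd Q s)) := by
        intro s
        by_cases h1 : a ∈ s <;> by_cases h2 : a ∈ t <;>
          simp only [hd, hεt, h1, h2, if_pos, if_neg, iff_true, iff_false, not_true, not_false_iff,
            if_true, smul_smul] <;> norm_num <;> rw [← add_smul] <;> ring_nf
      have hdsum : ∑ s ∈ F, d s • eProd Q s = 0 := by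
        rw [Finset.sum_congr rfl (fun s _ => hδ s), Finset.sum_add_distrib, ← Finset.smul_sum,
          ← Finset.smul_sum, hsum, h2, smul_zero, smul_zero, add_zero]
      set F' := F.filter (fun s => (a ∈ s ↔ a ∈ t)) with hF'
      have hkey : ∑ s ∈ F', c s • eProd Q s = 0 := by
        have heq : ∑ s ∈ F', c s • eProd Q s = ∑ s ∈ F, d s • eProd Q s := by
          rw [hF', Finset.sum_filter]
          refine Finset.sum_congr rfl fun s _ => ?_
          by_cases hp : (a ∈ s ↔ a ∈ t) <;> simp [hd, hp]
        rw [heq, hdsum]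
      have hss : F' ⊂ F := by
        refine Finset.ssubset_iff_of_subset (Finset.filter_subset _ _) |>.mpr ?_
        refine ⟨t', ht', ?_⟩
        intro hmem
        rw [Finset.mem_filter] at hmem
        obtain ⟨-, hiff⟩ := hmem
        rcases ha with ⟨h1, h2⟩ | ⟨h1, h2⟩
        · exact h2 (hiff.mp h1)
        · exact h2 (hiff.mpr h1)
      exact ih F' hss c hkey t (Finset.mem_filter.mpr ⟨ht, Iff.rfl⟩)

lemma eProd_linearIndependent :
    LinearIndependent ℝ (fun s : Finset (Fin n) => eProd Q s) := by
  rw [linearIndependent_iff']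
  intro F g h i hi
  exact indep_aux hQ F g h i hi

lemma mem_span_eProd (x : CliffordAlgebra Q) :
    x ∈ Submodule.span ℝ (Set.range (fun s : Finset (Fin n) => eProd Q s)) := by
  set S := Submodule.span ℝ (Set.range fun s : Finset (Fin n) => eProd Q s) with hS
  have hgen : ∀ s : Finset (Fin n), eProd Q s ∈ S := fun s =>
    Submodule.subset_span ⟨s, rfl⟩
  have hmul : ∀ x ∈ S, ∀ y ∈ S, x * y ∈ S := by
    intro x hx
    refine Submodule.span_induction ?_ ?_ ?_ ?_ hx
    · rintro x ⟨s, rfl⟩ y hy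
      refine Submodule.span_induction ?_ ?_ ?_ ?_ hy
      · rintro y ⟨t, rfl⟩
        obtain ⟨c, -, h⟩ := eProd_mul_eProd hQ s t
        rw [h]
        exact S.smul_mem _ (hgen _)
      · rw [mul_zero]; exact S.zero_mem
      · intro y z _ _ h1 h2
        rw [mul_add]
        exact S.add_mem h1 h2
      · intro r y _ h1
        rw [mul_smul_comm]
        exact S.smul_mem _ h1
    · intro y _; rw [zero_mul]; exact S.zero_mem
    · intro x₁ x₂ _ _ h1 h2 y hy
      rw [add_mul]
      exact S.add_mem (h1 y hy) (h2 y hy)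
    · intro r x₁ _ h1 y hy
      rw [smul_mul_assoc]
      exact S.smul_mem _ (h1 y hy)
  induction x using CliffordAlgebra.induction with
  | algebraMap r =>
    have : algebraMap ℝ (CliffordAlgebra Q) r = r • eProd Q ∅ := by
      rw [eProd_empty, Algebra.smul_def, mul_one]
    rw [this]
    exact S.smul_mem _ (hgen ∅)
  | ι v =>
    have : ι Q v = ∑ a, v a • egen Q a := by
      conv_lhs => rw [← pi_decomp v]
      rw [map_sum]
      refine Finset.sum_congr rfl fun a _ => ?_
      rw [map_smul, egen]
    rw [this]
    refine Submodule.sum_mem S fun a _ => S.smul_mem _ ?_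
    rw [← eProd_singleton]
    exact hgen _
  | mul x y hx hy => exact hmul x hx y hy
  | add x y hx hy => exact S.add_mem hx hy

def cBasis (hQ : DiagQ Q) : Module.Basis (Finset (Fin n)) ℝ (CliffordAlgebra Q) :=
  Module.Basis.mk (eProd_linearIndependent hQ) (fun x _ => mem_span_eProd hQ x)

@[simp] lemma cBasis_apply (s : Finset (Fin n)) : cBasis hQ s = eProd Q s := Module.Basis.mk_apply _ _ _

omit hQ in
lemma reverse_lprod (l : List (Fin n)) :
    reverse (Q := Q) (lprod Q l) = lprod Q l.reverse := by
  induction l with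
  | nil => simp [reverse.map_one]
  | cons a l ih =>
    rw [lprod_cons, reverse.map_mul, ih, List.reverse_cons, lprod_append]
    simp [lprod, egen, reverse_ι]

lemma lprod_reverse_sign {l : List (Fin n)} (hl : l.Nodup) :
    lprod Q l.reverse = ((-1 : ℝ) ^ (l.length.choose 2)) • lprod Q l := by
  induction l with
  | nil => simp
  | cons a l ih =>
    have hal : a ∉ l := (List.nodup_cons.mp hl).1
    rw [List.reverse_cons, lprod_append, ih (List.nodup_cons.mp hl).2]
    have : lprod Q [a] = egen Q a := by simp [lprod]
    rw [this, smul_mul_assoc, lprod_mul_egen hQ hal, smul_smul, List.length_cons]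
    have hch : (l.length + 1).choose 2 = l.length.choose 2 + l.length := by
      rw [Nat.choose_succ_succ, Nat.choose_one_right, add_comm]
    rw [hch, pow_add, lprod_cons]

lemma reverse_eProd (s : Finset (Fin n)) :
    reverse (Q := Q) (eProd Q s) = ((-1 : ℝ) ^ (s.card.choose 2)) • eProd Q s := by
  rw [eProd_eq_lprod, reverse_lprod, lprod_reverse_sign hQ (Finset.sort_nodup _ _),
    Finset.length_sort]

omit hQ in
lemma involute_lprod (l : List (Fin n)) :
    involute (Q := Q) (lprod Q l) = ((-1 : ℝ) ^ l.length) • lprod Q l := by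
  induction l with
  | nil => simp
  | cons a l ih =>
    rw [lprod_cons, map_mul, ih, List.length_cons, pow_succ]
    have : involute (Q := Q) (egen Q a) = -(egen Q a) := involute_ι _
    rw [this, mul_smul_comm, mul_neg_one, neg_smul, neg_mul, smul_neg]

omit hQ in
lemma involute_eProd (s : Finset (Fin n)) :
    involute (Q := Q) (eProd Q s) = ((-1 : ℝ) ^ s.card) • eProd Q s := by
  rw [eProd_eq_lprod, involute_lprod, Finset.length_sort]

lemma egen_comm_split (a : Fin n) (l₁ l₂ : List (Fin n)) (h1 : a ∉ l₁) (h2 : a ∉ l₂) :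
    egen Q a * lprod Q (l₁ ++ a :: l₂) =
      ((-1:ℝ) ^ (l₁.length + l₂.length)) • (lprod Q (l₁ ++ a :: l₂) * egen Q a) := by
  have e1 : egen Q a * lprod Q l₁ = ((-1:ℝ)^l₁.length) • (lprod Q l₁ * egen Q a) := by
    rw [lprod_mul_egen hQ h1, smul_smul, ← pow_add, ← two_mul, pow_mul]
    norm_num
  have hl : egen Q a * lprod Q (l₁ ++ a :: l₂) =
      ((-1:ℝ)^l₁.length) • (lprod Q l₁ * (algebraMap ℝ (CliffordAlgebra Q) (Q (Pi.single a 1)) *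
        lprod Q l₂)) := by
    rw [lprod_append, lprod_cons, ← mul_assoc, e1, smul_mul_assoc, mul_assoc,
      ← mul_assoc (egen Q a), egen_sq]
  have hr : lprod Q (l₁ ++ a :: l₂) * egen Q a =
      ((-1:ℝ)^l₂.length) • (lprod Q l₁ * (algebraMap ℝ (CliffordAlgebra Q) (Q (Pi.single a 1)) *
        lprod Q l₂)) := by
    rw [lprod_append, lprod_cons, mul_assoc, mul_assoc, lprod_mul_egen hQ h2, mul_smul_comm,
      mul_smul_comm, ← mul_assoc (egen Q a), egen_sq]
  rw [hl, hr, smul_smul, ← pow_add]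
  congr 1
  rw [add_assoc, ← two_mul, pow_add, pow_mul]
  norm_num

omit hQ in
lemma ι_decomp (v : Fin n → ℝ) : ι Q v = ∑ a, v a • egen Q a := by
  conv_lhs => rw [← pi_decomp v]
  rw [map_sum]
  refine Finset.sum_congr rfl fun a _ => ?_
  rw [map_smul, egen]

lemma eProd_univ_comm_egen (h5 : n = 5) (a : Fin n) :
    egen Q a * eProd Q Finset.univ = eProd Q Finset.univ * egen Q a := by
  have hmem : a ∈ Finset.univ.sort (· ≤ ·) := (Finset.mem_sort _).mpr (Finset.mem_univ a)
  obtain ⟨l₁, l₂, hsplit⟩ := List.append_of_mem hmem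
  have hnd : (Finset.univ.sort (α := Fin n) (· ≤ ·)).Nodup := Finset.sort_nodup _ _
  rw [hsplit] at hnd
  have h1 : a ∉ l₁ := by
    rw [List.nodup_append] at hnd
    intro hmem1
    exact hnd.2.2 a hmem1 a List.mem_cons_self rfl
  have h2 : a ∉ l₂ := by
    rw [List.nodup_append, List.nodup_cons] at hnd
    exact hnd.2.1.1
  have hlen : l₁.length + l₂.length = 4 := by
    have := congrArg List.length hsplit
    rw [Finset.length_sort, Finset.card_univ, Fintype.card_fin] at this
    rw [List.length_append, List.length_cons] at this
    omega
  rw [eProd_eq_lprod, hsplit, egen_comm_split hQ a l₁ l₂ h1 h2, hlen]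
  norm_num


lemma eProd_univ_central (h5 : n = 5) (x : CliffordAlgebra Q) :
    eProd Q Finset.univ * x = x * eProd Q Finset.univ := by
  induction x using CliffordAlgebra.induction with
  | algebraMap r => exact (Algebra.commutes r (eProd Q Finset.univ)).symm
  | ι v =>
    rw [ι_decomp, Finset.mul_sum, Finset.sum_mul]
    refine Finset.sum_congr rfl fun a _ => ?_
    rw [mul_smul_comm, smul_mul_assoc, eProd_univ_comm_egen hQ h5]
  | mul x y hx hy => rw [← mul_assoc, hx, mul_assoc, hy, mul_assoc]
  | add x y hx hy => rw [mul_add, add_mul, hx, hy]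

lemma coord_eProd (s t : Finset (Fin n)) :
    (cBasis hQ).coord s (eProd Q t) = if t = s then 1 else 0 := by
  rw [← cBasis_apply (hQ := hQ), Module.Basis.coord_apply, Module.Basis.repr_self, Finsupp.single_apply]

lemma coord_involute (s : Finset (Fin n)) (x : CliffordAlgebra Q) :
    (cBasis hQ).coord s (involute (Q := Q) x) = ((-1:ℝ)^s.card) * (cBasis hQ).coord s x := by
  have h : ((cBasis hQ).coord s).comp (involute (Q := Q) : CliffordAlgebra Q →ₐ[ℝ] CliffordAlgebra Q).toLinearMap
      = ((-1:ℝ)^s.card) • (cBasis hQ).coord s := by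
    apply Module.Basis.ext (cBasis hQ)
    intro t
    rw [LinearMap.comp_apply, AlgHom.toLinearMap_apply, LinearMap.smul_apply, cBasis_apply,
      involute_eProd, map_smul, coord_eProd hQ]
    by_cases hts : t = s
    · subst hts; simp
    · simp [hts]
  have := LinearMap.congr_fun h x
  rw [LinearMap.comp_apply, AlgHom.toLinearMap_apply, LinearMap.smul_apply, smul_eq_mul] at this
  exact this

lemma coord_reverse (s : Finset (Fin n)) (x : CliffordAlgebra Q) :
    (cBasis hQ).coord s (reverse (Q := Q) x) =
      ((-1:ℝ)^(s.card.choose 2)) * (cBasis hQ).coord s x := by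
  have h : ((cBasis hQ).coord s).comp (reverse (Q := Q))
      = ((-1:ℝ)^(s.card.choose 2)) • (cBasis hQ).coord s := by
    apply Module.Basis.ext (cBasis hQ)
    intro t
    rw [LinearMap.comp_apply, LinearMap.smul_apply, cBasis_apply,
      reverse_eProd hQ, map_smul, coord_eProd hQ]
    by_cases hts : t = s
    · subst hts; simp
    · simp [hts]
  have := LinearMap.congr_fun h x
  rw [LinearMap.comp_apply, LinearMap.smul_apply, smul_eq_mul] at this
  exact this

lemma coord_mul_comm (x y : CliffordAlgebra Q) :
    (cBasis hQ).coord ∅ (x * y) = (cBasis hQ).coord ∅ (y * x) := by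
  have h : ((LinearMap.mul ℝ (CliffordAlgebra Q)).compr₂ ((cBasis hQ).coord ∅))
      = ((LinearMap.mul ℝ (CliffordAlgebra Q)).compr₂ ((cBasis hQ).coord ∅)).flip := by
    apply Module.Basis.ext (cBasis hQ)
    intro s
    apply Module.Basis.ext (cBasis hQ)
    intro t
    rw [LinearMap.flip_apply, LinearMap.compr₂_apply, LinearMap.compr₂_apply,
      LinearMap.mul_apply', LinearMap.mul_apply', cBasis_apply, cBasis_apply]
    by_cases hst : s = t
    · subst hst; rfl
    · obtain ⟨c, -, h1⟩ := eProd_mul_eProd hQ s t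
      obtain ⟨c', -, h2⟩ := eProd_mul_eProd hQ t s
      have hne : s ∆ t ≠ ∅ := fun h => hst (symmDiff_eq_bot.mp h)
      have hne' : t ∆ s ≠ ∅ := fun h => hst (symmDiff_eq_bot.mp h).symm
      rw [h1, h2, map_smul, map_smul, coord_eProd hQ, coord_eProd hQ, if_neg hne, if_neg hne']
      simp
  have := LinearMap.congr_fun (LinearMap.congr_fun h x) y
  rw [LinearMap.flip_apply, LinearMap.compr₂_apply, LinearMap.compr₂_apply,
    LinearMap.mul_apply', LinearMap.mul_apply'] at this
  exact this

lemma coord_mulE (h5 : n = 5) :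
    ∃ κ : ℝ, κ ≠ 0 ∧ ∀ x : CliffordAlgebra Q,
      (cBasis hQ).coord ∅ (eProd Q Finset.univ * x) = κ * (cBasis hQ).coord Finset.univ x := by
  obtain ⟨κ, hκ, hEE⟩ := eProd_mul_eProd hQ (Finset.univ : Finset (Fin n)) Finset.univ
  rw [symmDiff_self] at hEE
  refine ⟨κ, hκ, ?_⟩
  have h : ((cBasis hQ).coord ∅).comp (LinearMap.mulLeft ℝ (eProd Q Finset.univ))
      = κ • (cBasis hQ).coord Finset.univ := by
    apply Module.Basis.ext (cBasis hQ)
    intro t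
    rw [LinearMap.comp_apply, LinearMap.mulLeft_apply, LinearMap.smul_apply, cBasis_apply,
      coord_eProd hQ, smul_eq_mul]
    by_cases ht : t = Finset.univ
    · subst ht
      rw [hEE]
      have : (⊥ : Finset (Fin n)) = ∅ := rfl
      rw [this, map_smul, coord_eProd hQ, if_pos rfl, if_pos rfl, smul_eq_mul]
    · obtain ⟨c, -, h1⟩ := eProd_mul_eProd hQ Finset.univ t
      have hne : Finset.univ ∆ t ≠ ∅ := fun h => ht (symmDiff_eq_bot.mp h).symm
      rw [h1, map_smul, coord_eProd hQ, if_neg hne, if_neg ht, smul_eq_mul, mul_zero, mul_zero]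
  intro x
  have := LinearMap.congr_fun h x
  rw [LinearMap.comp_apply, LinearMap.mulLeft_apply, LinearMap.smul_apply, smul_eq_mul] at this
  exact this

lemma conj_key (hn : n ≤ 5) (T : (CliffordAlgebra Q)ˣ)
    (hT : (↑T : CliffordAlgebra Q) ∈ Pset Q)
    (hc : reverse (Q := Q) (↑T : CliffordAlgebra Q) * ↑T ∈
      Subalgebra.center ℝ (CliffordAlgebra Q))
    (a : Fin n) :
    (↑T : CliffordAlgebra Q) * egen Q a * (↑T⁻¹ : CliffordAlgebra Q) ∈ gradeSubmodule Q 1 := by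
  classical
  set X : CliffordAlgebra Q := ↑T * egen Q a * ↑T⁻¹ with hX
  have hrev_egen : reverse (Q := Q) (egen Q a) = egen Q a := reverse_ι _
  have hinv_egen : involute (Q := Q) (egen Q a) = -(egen Q a) := involute_ι _
  -- (I) reverse X = X
  have hrevX : reverse (Q := Q) X = X := by
    have hRunit : reverse (Q := Q) (↑T : CliffordAlgebra Q) *
        reverse (Q := Q) (↑T⁻¹ : CliffordAlgebra Q) = 1 := by
      rw [← reverse.map_mul, Units.inv_mul, reverse.map_one]
    have hRunit' : reverse (Q := Q) (↑T⁻¹ : CliffordAlgebra Q) *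
        reverse (Q := Q) (↑T : CliffordAlgebra Q) = 1 := by
      rw [← reverse.map_mul, Units.mul_inv, reverse.map_one]
    set Rv := reverse (Q := Q) (↑T : CliffordAlgebra Q) with hRv
    have hW'u : IsUnit (Rv * (↑T : CliffordAlgebra Q)) := by
      have h1 : IsUnit Rv :=
        ⟨⟨Rv, reverse (Q := Q) (↑T⁻¹ : CliffordAlgebra Q), hRunit, hRunit'⟩, rfl⟩
      exact h1.mul T.isUnit
    have hW'c : ∀ x : CliffordAlgebra Q, x * (Rv * ↑T) = (Rv * ↑T) * x := fun x =>
      Subalgebra.mem_center_iff.mp hc x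
    set ω := hW'u.unit with hω
    have hωv : (↑ω : CliffordAlgebra Q) = Rv * ↑T := hW'u.unit_spec
    have hTinv : (↑T⁻¹ : CliffordAlgebra Q) = ↑ω⁻¹ * Rv := by
      have h1 : ((↑ω⁻¹ : CliffordAlgebra Q) * Rv) * ↑T = 1 := by
        rw [mul_assoc, ← hωv, Units.inv_mul]
      calc (↑T⁻¹ : CliffordAlgebra Q) = 1 * ↑T⁻¹ := (one_mul _).symm
        _ = ((↑ω⁻¹ : CliffordAlgebra Q) * Rv) * ↑T * ↑T⁻¹ := by rw [h1]
        _ = ((↑ω⁻¹ : CliffordAlgebra Q) * Rv) * (↑T * ↑T⁻¹) := by rw [mul_assoc]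
        _ = ↑ω⁻¹ * Rv := by rw [Units.mul_inv, mul_one]
    have hrevW' : reverse (Q := Q) ((↑ω : CliffordAlgebra Q)) = ↑ω := by
      rw [hωv, reverse.map_mul, hRv, reverse_reverse]
    have hrevωinv : reverse (Q := Q) (↑ω⁻¹ : CliffordAlgebra Q) = ↑ω⁻¹ := by
      have h1 : reverse (Q := Q) (↑ω⁻¹ : CliffordAlgebra Q) * ↑ω = 1 := by
        have h2 := reverse.map_mul (Q := Q) (↑ω : CliffordAlgebra Q) (↑ω⁻¹ : CliffordAlgebra Q)
        rw [Units.mul_inv, reverse.map_one, hrevW'] at h2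
        exact h2.symm
      calc reverse (Q := Q) (↑ω⁻¹ : CliffordAlgebra Q)
          = reverse (Q := Q) (↑ω⁻¹ : CliffordAlgebra Q) * (↑ω * ↑ω⁻¹) := by
            rw [Units.mul_inv, mul_one]
        _ = (reverse (Q := Q) (↑ω⁻¹ : CliffordAlgebra Q) * ↑ω) * ↑ω⁻¹ := by rw [mul_assoc]
        _ = ↑ω⁻¹ := by rw [h1, one_mul]
    have hωinvc : ∀ x : CliffordAlgebra Q, ↑ω⁻¹ * x = x * (↑ω⁻¹ : CliffordAlgebra Q) := by
      intro x
      calc (↑ω⁻¹ : CliffordAlgebra Q) * x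
          = ↑ω⁻¹ * x * (↑ω * ↑ω⁻¹) := by rw [Units.mul_inv, mul_one]
        _ = ↑ω⁻¹ * ((x * ↑ω) * ↑ω⁻¹) := by simp only [mul_assoc]
        _ = ↑ω⁻¹ * ((↑ω * x) * ↑ω⁻¹) := by rw [hωv, hW'c]
        _ = (↑ω⁻¹ * ↑ω) * (x * ↑ω⁻¹) := by simp only [mul_assoc]
        _ = x * ↑ω⁻¹ := by rw [Units.inv_mul, one_mul]
    have hrevTinv : reverse (Q := Q) (↑T⁻¹ : CliffordAlgebra Q) = ↑T * ↑ω⁻¹ := by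
      rw [hTinv, reverse.map_mul, hrevωinv, hRv, reverse_reverse]
    calc reverse (Q := Q) X
        = reverse (Q := Q) (↑T⁻¹ : CliffordAlgebra Q) *
            (reverse (Q := Q) (egen Q a) * Rv) := by
          rw [hX, reverse.map_mul, reverse.map_mul]
      _ = (↑T * ↑ω⁻¹) * (egen Q a * Rv) := by rw [hrevTinv, hrev_egen]
      _ = ↑T * ((↑ω⁻¹ * egen Q a) * Rv) := by simp only [mul_assoc]
      _ = ↑T * ((egen Q a * ↑ω⁻¹) * Rv) := by rw [hωinvc]
      _ = ↑T * egen Q a * (↑ω⁻¹ * Rv) := by simp only [mul_assoc]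
      _ = X := by rw [← hTinv, hX]
  -- (II) involute X = -X
  obtain ⟨W, T₀, hWc, hWu, hpar, hT₀u, heq⟩ := hT
  have hinvX : involute (Q := Q) X = -X := by
    set u := hT₀u.unit with hu'
    set w := hWu.unit with hw'
    have hu : (↑u : CliffordAlgebra Q) = T₀ := hT₀u.unit_spec
    have hw : (↑w : CliffordAlgebra Q) = W := hWu.unit_spec
    have hWc' : ∀ x : CliffordAlgebra Q, x * W = W * x := fun x =>
      Subalgebra.mem_center_iff.mp hWc x
    have hTu : T = w * u := by
      apply Units.ext
      rw [Units.val_mul, hw, hu]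
      exact heq
    have hTinv2 : (↑T⁻¹ : CliffordAlgebra Q) = ↑u⁻¹ * ↑w⁻¹ := by
      rw [hTu, mul_inv_rev, Units.val_mul]
    have hXalt : X = T₀ * egen Q a * ↑u⁻¹ := by
      rw [hX, heq, hTinv2]
      calc W * T₀ * egen Q a * ((↑u⁻¹ : CliffordAlgebra Q) * ↑w⁻¹)
          = W * ((T₀ * egen Q a * ↑u⁻¹) * ↑w⁻¹) := by simp only [mul_assoc]
        _ = ((T₀ * egen Q a * ↑u⁻¹) * ↑w⁻¹) * W := by rw [hWc']
        _ = (T₀ * egen Q a * ↑u⁻¹) * (↑w⁻¹ * W) := by simp only [mul_assoc]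
        _ = (T₀ * egen Q a * ↑u⁻¹) * (↑w⁻¹ * ↑w) := by rw [hw]
        _ = T₀ * egen Q a * ↑u⁻¹ := by rw [Units.inv_mul, mul_one]
    rcases hpar with hev | hod
    · have hiT₀ : involute (Q := Q) T₀ = T₀ := involute_eq_of_mem_even hev
      have hiuinv : involute (Q := Q) (↑u⁻¹ : CliffordAlgebra Q) = ↑u⁻¹ := by
        have h1 : involute (Q := Q) (↑u⁻¹ : CliffordAlgebra Q) * T₀ = 1 := by
          rw [← hiT₀, ← hu, ← map_mul, Units.inv_mul, map_one]
        calc involute (Q := Q) (↑u⁻¹ : CliffordAlgebra Q)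
            = involute (Q := Q) (↑u⁻¹ : CliffordAlgebra Q) * (T₀ * ↑u⁻¹) := by
              rw [← hu, Units.mul_inv, mul_one]
          _ = (involute (Q := Q) (↑u⁻¹ : CliffordAlgebra Q) * T₀) * ↑u⁻¹ := by
              rw [mul_assoc]
          _ = ↑u⁻¹ := by rw [h1, one_mul]
      rw [hXalt, map_mul, map_mul, hiT₀, hiuinv, hinv_egen]
      simp only [mul_neg, neg_mul]
    · have hiT₀ : involute (Q := Q) T₀ = -T₀ := involute_eq_of_mem_odd hod
      have hiuinv : involute (Q := Q) (↑u⁻¹ : CliffordAlgebra Q) = -(↑u⁻¹ : CliffordAlgebra Q) := by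
        have h1 : involute (Q := Q) (↑u⁻¹ : CliffordAlgebra Q) * T₀ = -1 := by
          have h2 : involute (Q := Q) (↑u⁻¹ : CliffordAlgebra Q) * (-T₀) = 1 := by
            rw [← hiT₀, ← hu, ← map_mul, Units.inv_mul, map_one]
          rw [mul_neg] at h2
          rw [← neg_neg (involute (Q := Q) (↑u⁻¹ : CliffordAlgebra Q) * T₀), h2]
        calc involute (Q := Q) (↑u⁻¹ : CliffordAlgebra Q)
            = involute (Q := Q) (↑u⁻¹ : CliffordAlgebra Q) * (T₀ * ↑u⁻¹) := by
              rw [← hu, Units.mul_inv, mul_one]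
          _ = (involute (Q := Q) (↑u⁻¹ : CliffordAlgebra Q) * T₀) * ↑u⁻¹ := by
              rw [mul_assoc]
          _ = -(↑u⁻¹ : CliffordAlgebra Q) := by rw [h1, neg_one_mul]
      rw [hXalt, map_mul, map_mul, hiT₀, hiuinv, hinv_egen]
      simp only [mul_neg, neg_mul, neg_neg]
  -- (III) coordinates
  have hcoord : ∀ s : Finset (Fin n), (cBasis hQ).coord s X ≠ 0 → s.card = 1 := by
    intro s hs
    have h1 : ((-1:ℝ)^s.card) * (cBasis hQ).coord s X = -((cBasis hQ).coord s X) := by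
      rw [← coord_involute hQ, hinvX, map_neg]
    have h2 : ((-1:ℝ)^(s.card.choose 2)) * (cBasis hQ).coord s X = (cBasis hQ).coord s X := by
      rw [← coord_reverse hQ, hrevX]
    have hs' : ((cBasis hQ).repr X) s ≠ 0 := by rwa [Module.Basis.coord_apply] at hs
    have hle : s.card ≤ 5 := by
      have h' := Finset.card_le_univ s
      rw [Fintype.card_fin] at h'
      omega
    have hcases : s.card = 0 ∨ s.card = 1 ∨ s.card = 2 ∨ s.card = 3 ∨ s.card = 4 ∨ s.card = 5 := by
      omega
    rcases hcases with h | h | h | h | h | h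
    · rw [h] at h1; norm_num at h1; exact absurd (by linarith) hs'
    · exact h
    · rw [h] at h1; norm_num at h1; exact absurd (by linarith) hs'
    · rw [h] at h2; norm_num at h2; exact absurd (by linarith) hs'
    · rw [h] at h1; norm_num at h1; exact absurd (by linarith) hs' 
    · -- card 5 : trace argument
      exfalso
      have hn5 : n = 5 := by
        have h'' := Finset.card_le_univ s
        rw [Fintype.card_fin] at h''
        omega
      have hsu : s = Finset.univ := by
        apply Finset.eq_univ_of_card
        rw [Fintype.card_fin]
        omega
      obtain ⟨κ, hκ, hEfun⟩ := coord_mulE hQ hn5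
      have hEX : (cBasis hQ).coord ∅ (eProd Q Finset.univ * X) = 0 := by
        have e1 : eProd Q Finset.univ * X =
            (eProd Q Finset.univ * ↑T * egen Q a) * ↑T⁻¹ := by
          rw [hX]; simp only [mul_assoc]
        have e2 : (↑T⁻¹ : CliffordAlgebra Q) * (eProd Q Finset.univ * ↑T * egen Q a) =
            eProd Q Finset.univ * egen Q a := by
          calc (↑T⁻¹ : CliffordAlgebra Q) * (eProd Q Finset.univ * ↑T * egen Q a)
              = (↑T⁻¹ * eProd Q Finset.univ) * (↑T * egen Q a) := by simp only [mul_assoc]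
            _ = (eProd Q Finset.univ * ↑T⁻¹) * (↑T * egen Q a) := by
                rw [eProd_univ_central hQ hn5]
            _ = eProd Q Finset.univ * ((↑T⁻¹ * ↑T) * egen Q a) := by simp only [mul_assoc]
            _ = eProd Q Finset.univ * egen Q a := by rw [Units.inv_mul, one_mul]
        rw [e1, coord_mul_comm hQ, e2]
        obtain ⟨c', -, h3⟩ := eProd_mul_eProd hQ Finset.univ {a}
        rw [eProd_singleton] at h3
        have hne : Finset.univ ∆ ({a} : Finset (Fin n)) ≠ ∅ := by
          intro hemp
          have := symmDiff_eq_bot.mp hemp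
          have hcard := congrArg Finset.card this
          rw [Finset.card_univ, Fintype.card_fin, Finset.card_singleton] at hcard
          omega
        rw [h3, map_smul, coord_eProd hQ, if_neg hne, smul_eq_mul, mul_zero]
      have := hEfun X
      rw [hEX] at this
      have hzero : (cBasis hQ).coord Finset.univ X = 0 := by
        rcases mul_eq_zero.mp this.symm with h' | h'
        · exact absurd h' hκ
        · exact h'
      rw [hsu] at hs
      exact hs hzero
  -- (IV) conclude
  have hXdec : X = ∑ s ∈ ((cBasis hQ).repr X).support, ((cBasis hQ).repr X) s • eProd Q s := by
    conv_lhs => rw [← (cBasis hQ).linearCombination_repr X]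
    rw [Finsupp.linearCombination_apply, Finsupp.sum]
    exact Finset.sum_congr rfl fun s _ => by rw [cBasis_apply]
  rw [hX] at hXdec ⊢
  rw [hXdec]
  refine Submodule.sum_mem _ fun s hs => Submodule.smul_mem _ _ (Submodule.subset_span ?_)
  refine ⟨s, hcoord s ?_, rfl⟩
  rw [Module.Basis.coord_apply]
  exact Finsupp.mem_support_iff.mp hs


omit hQ in
/-- `Q ⊆ Γ` for `n ≤ 5`: if `T ∈ Z^×(C^{×(0)} ∪ C^{×(1)})` and `reverse(T) * T` is
an invertible central element, then conjugation by `T` preserves `C^1`. -/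
theorem stmt16 (hQ : DiagQ Q) (hn : n ≤ 5) (T : (CliffordAlgebra Q)ˣ)
    (hT : (↑T : CliffordAlgebra Q) ∈ Pset Q)
    (hc : reverse (Q := Q) (↑T : CliffordAlgebra Q) * ↑T ∈
      Subalgebra.center ℝ (CliffordAlgebra Q)) :
    ∀ U ∈ gradeSubmodule Q 1,
      (↑T : CliffordAlgebra Q) * U * (↑T⁻¹ : CliffordAlgebra Q) ∈ gradeSubmodule Q 1 := by
  intro U hU
  refine Submodule.span_induction ?_ ?_ ?_ ?_ hU
  · rintro x ⟨s, hs1, rfl⟩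
    obtain ⟨a, rfl⟩ := Finset.card_eq_one.mp hs1
    rw [eProd_singleton]
    exact conj_key hQ hn T hT hc a
  · rw [mul_zero, zero_mul]
    exact Submodule.zero_mem _
  · intro x y _ _ h1 h2
    rw [mul_add, add_mul]
    exact Submodule.add_mem _ h1 h2
  · intro r x _ h1
    rw [mul_smul_comm, smul_mul_assoc]
    exact Submodule.smul_mem _ _ h1
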